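/- Let M be a matroid on a finite ground set E and let e ≠ f be elements of E that are in series in M, i.e. {e, f} is a circuit of the dual matroid M✶. Let S ⊆ E with e, f ∈ S and with closure cl_M(S) = E. Then in the restriction M|S, either e and f are in series (i.e. {e, f} is a circuit of the dual (M|S)✶), or both e and f are coloops of M|S. -/

import Mathlib

/-- A circuit of a matroid is a minimal dependent set. -/
def Matroid.IsCircuit' {α : Type*} (M : Matroid α) (C : Set α) : Prop :=
  Minimal M.Dep C

/-- A coloop of a matroid is an element contained in every base. -/
def Matroid.IsColoop' {α : Type*} (M : Matroid α) (e : α) : Prop :=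
  ∀ B, M.IsBase B → e ∈ B

open Matroid in
theorem stmt_8 {α : Type*} [Fintype α]
    (M : Matroid α) (hE : M.E = Set.univ)
    (e f : α) (hef : e ≠ f)
    -- `e` and `f` are in series: `{e, f}` is a circuit of the dual `M✶`
    (hser : M✶.IsCircuit' {e, f})
    (S : Set α) (heS : e ∈ S) (hfS : f ∈ S)
    -- `cl_M(S) = E`
    (hcl : M.closure S = Set.univ) :
    -- in `M|S`, either `e, f` are in series, or both are coloops
    (M ↾ S)✶.IsCircuit' {e, f} ∨
      ((M ↾ S).IsColoop' e ∧ (M ↾ S).IsColoop' f) := by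
  classical
  have hground : ∀ X : Set α, X ⊆ M.E := fun X => by simp [hE]
  have hser' : Minimal M✶.Dep {e, f} := hser
  obtain ⟨hdep, hmin⟩ := hser'
  -- the singletons are independent in the dual
  have hIe : M✶.Indep {e} := by
    rw [← Matroid.not_dep_iff (by simp [hE])]
    intro hd
    have h2 := hmin hd (by simp)
    have : f ∈ ({e} : Set α) := h2 (Set.mem_insert_iff.2 (Or.inr rfl))
    exact hef (Set.mem_singleton_iff.1 this).symm
  have hIf : M✶.Indep {f} := by
    rw [← Matroid.not_dep_iff (by simp [hE])]
    intro hd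
    have h2 := hmin hd (by simp)
    have : e ∈ ({f} : Set α) := h2 (Set.mem_insert_iff.2 (Or.inl rfl))
    exact hef (Set.mem_singleton_iff.1 this)
  -- closure of the complement of one element is everything
  have hclSe : M.closure (Set.univ \ {e}) = Set.univ := by
    obtain ⟨-, B, hB, hdisj⟩ := Matroid.dual_indep_iff_exists'.1 hIe
    have hsub : B ⊆ Set.univ \ {e} := fun x hx =>
      ⟨Set.mem_univ _, fun h => Set.disjoint_singleton_left.1 hdisj (h ▸ hx)⟩
    have h2 := hB.closure_of_superset hsub
    rw [hE] at h2; exact h2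
  have hclSf : M.closure (Set.univ \ {f}) = Set.univ := by
    obtain ⟨-, B, hB, hdisj⟩ := Matroid.dual_indep_iff_exists'.1 hIf
    have hsub : B ⊆ Set.univ \ {f} := fun x hx =>
      ⟨Set.mem_univ _, fun h => Set.disjoint_singleton_left.1 hdisj (h ▸ hx)⟩
    have h2 := hB.closure_of_superset hsub
    rw [hE] at h2; exact h2
  -- the complement of {e, f} is not spanning
  have hnotspan : M.closure (Set.univ \ {e, f}) ≠ Set.univ := by
    intro hsp
    have hspan : M.Spanning (Set.univ \ {e, f}) := by
      rw [Matroid.spanning_iff_closure_eq (hground _), hE]; exact hsp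
    obtain ⟨B, hB, hBsub⟩ := (Matroid.spanning_iff_exists_isBase_subset (hground _)).1 hspan
    obtain ⟨x, hx⟩ := (Matroid.dual_dep_iff_forall.1 hdep).1 B hB
    exact (hBsub hx.2).2 hx.1
  -- insert identities
  have hins_e : insert e (Set.univ \ ({e, f} : Set α)) = Set.univ \ {f} := by
    ext x
    simp only [Set.mem_diff, Set.mem_insert_iff, Set.mem_singleton_iff, Set.mem_univ, true_and,
      not_or]
    constructor
    · rintro (rfl | ⟨h1, h2⟩); exacts [hef, h2]
    · intro h; by_cases hx : x = e; · exact Or.inl hx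
      exact Or.inr ⟨hx, h⟩
  have hins_f : insert f (Set.univ \ ({e, f} : Set α)) = Set.univ \ {e} := by
    ext x
    simp only [Set.mem_diff, Set.mem_insert_iff, Set.mem_singleton_iff, Set.mem_univ, true_and,
      not_or]
    constructor
    · rintro (rfl | ⟨h1, h2⟩); exacts [Ne.symm hef, h1]
    · intro h; by_cases hx : x = f; · exact Or.inl hx
      exact Or.inr ⟨h, hx⟩
  -- neither e nor f is in the closure of the complement of {e,f}
  have hHe : e ∉ M.closure (Set.univ \ {e, f}) := by
    intro he
    have := Matroid.closure_insert_eq_of_mem_closure he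
    rw [hins_e, hclSf] at this
    exact hnotspan this.symm
  have hHf : f ∉ M.closure (Set.univ \ {e, f}) := by
    intro hf
    have := Matroid.closure_insert_eq_of_mem_closure hf
    rw [hins_f, hclSe] at this
    exact hnotspan this.symm
  set T : Set α := S \ {e, f} with hT
  have hTsub : T ⊆ Set.univ \ {e, f} := fun x hx => ⟨Set.mem_univ _, hx.2⟩
  have hTe : e ∉ M.closure T := fun h => hHe (M.closure_subset_closure hTsub h)
  have hTf : f ∉ M.closure T := fun h => hHf (M.closure_subset_closure hTsub h)
  -- diff identities in S
  have hSe : S \ {e} = insert f T := by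
    ext x
    simp only [hT, Set.mem_diff, Set.mem_insert_iff, Set.mem_singleton_iff, not_or]
    constructor
    · rintro ⟨h1, h2⟩; by_cases hx : x = f; · exact Or.inl hx
      exact Or.inr ⟨h1, h2, hx⟩
    · rintro (rfl | ⟨h1, h2, h3⟩); exacts [⟨hfS, Ne.symm hef⟩, ⟨h1, h2⟩]
  have hSf : S \ {f} = insert e T := by
    ext x
    simp only [hT, Set.mem_diff, Set.mem_insert_iff, Set.mem_singleton_iff, not_or]
    constructor
    · rintro ⟨h1, h2⟩; by_cases hx : x = e; · exact Or.inl hx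
      exact Or.inr ⟨h1, hx, h2⟩
    · rintro (rfl | ⟨h1, h2, h3⟩); exacts [⟨heS, hef⟩, ⟨h1, h3⟩]
  by_cases hcase : e ∈ M.closure (S \ {e})
  · -- series case: {e,f} is a circuit of (M ↾ S)✶
    left
    have he' : e ∈ M.closure (insert f T) := by rw [← hSe]; exact hcase
    have hf' : f ∈ M.closure (insert e T) := (Matroid.closure_exchange ⟨he', hTe⟩).1
    have hf2 : f ∈ M.closure (S \ {f}) := by rw [hSf]; exact hf'
    -- a base of M ↾ S avoiding e
    obtain ⟨I, hI⟩ := M.exists_isBasis (S \ {e}) (hground _)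
    have hIS : M.IsBasis I S := by
      refine hI.indep.isBasis_of_subset_of_subset_closure (hI.subset.trans Set.diff_subset) ?_
      rw [hI.closure_eq_closure]
      intro x hx
      by_cases hx' : x = e
      · exact hx' ▸ hcase
      · exact M.subset_closure _ (hground _) ⟨hx, hx'⟩
    have hIbase : (M ↾ S).IsBase I := hIS.restrict_isBase
    have heI : e ∉ I := fun h => (hI.subset h).2 rfl
    -- a base of M ↾ S avoiding f
    obtain ⟨J, hJ⟩ := M.exists_isBasis (S \ {f}) (hground _)
    have hJS : M.IsBasis J S := by
      refine hJ.indep.isBasis_of_subset_of_subset_closure (hJ.subset.trans Set.diff_subset) ?_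
      rw [hJ.closure_eq_closure]
      intro x hx
      by_cases hx' : x = f
      · exact hx' ▸ hf2
      · exact M.subset_closure _ (hground _) ⟨hx, hx'⟩
    have hJbase : (M ↾ S).IsBase J := hJS.restrict_isBase
    have hfJ : f ∉ J := fun h => (hJ.subset h).2 rfl
    have hIe' : (M ↾ S)✶.Indep {e} :=
      Matroid.dual_indep_iff_exists'.2 ⟨by simp [heS], I, hIbase,
        Set.disjoint_singleton_left.2 heI⟩
    have hIf' : (M ↾ S)✶.Indep {f} :=
      Matroid.dual_indep_iff_exists'.2 ⟨by simp [hfS], J, hJbase,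
        Set.disjoint_singleton_left.2 hfJ⟩
    constructor
    · -- {e, f} is dependent in (M ↾ S)✶
      rw [Matroid.dual_dep_iff_forall]
      refine ⟨fun B hB => ?_, by simp [Set.insert_subset_iff, heS, hfS]⟩
      by_contra hne
      rw [Set.not_nonempty_iff_eq_empty] at hne
      have hB' : M.IsBasis B S := (Matroid.isBase_restrict_iff (hground S)).1 hB
      have hBT : B ⊆ T := by
        intro x hx
        refine ⟨hB'.subset hx, fun hxef => ?_⟩
        have : x ∈ ({e, f} : Set α) ∩ B := ⟨hxef, hx⟩
        simp [hne] at this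
      have : e ∈ M.closure T :=
        M.closure_subset_closure hBT (hB'.subset_closure heS)
      exact hTe this
    · -- minimality
      intro D hD hDsub
      have heD : e ∈ D := by
        by_contra h
        have hDf : D ⊆ {f} := by
          intro y hy
          rcases hDsub hy with rfl | rfl
          · exact absurd hy h
          · rfl
        exact hD.not_indep (hIf'.subset hDf)
      have hfD : f ∈ D := by
        by_contra h
        have hDe : D ⊆ {e} := by
          intro y hy
          rcases hDsub hy with rfl | rfl
          · rfl
          · exact absurd hy h
        exact hD.not_indep (hIe'.subset hDe)
      intro x hx
      rcases hx with rfl | rfl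
      · exact heD
      · exact hfD
  · -- coloop case
    right
    have hfcase : f ∉ M.closure (S \ {f}) := by
      rw [hSf]
      intro hf'
      have := Matroid.closure_exchange ⟨hf', hTf⟩
      rw [← hSe] at this
      exact hcase this.1
    constructor
    · intro B hB
      by_contra h
      have hB' : M.IsBasis B S := (Matroid.isBase_restrict_iff (hground S)).1 hB
      have hBsub : B ⊆ S \ {e} := fun x hx => ⟨hB'.subset hx, fun hh => h (hh ▸ hx)⟩
      exact hcase (M.closure_subset_closure hBsub (hB'.subset_closure heS))
    · intro B hB
      by_contra h
      have hB' : M.IsBasis B S := (Matroid.isBase_restrict_iff (hground S)).1 hB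
      have hBsub : B ⊆ S \ {f} := fun x hx => ⟨hB'.subset hx, fun hh => h (hh ▸ hx)⟩
      exact hfcase (M.closure_subset_closure hBsub (hB'.subset_closure hfS))
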